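/- Let v ∈ ℝ⁴ satisfy η(v,v) = 1 and v₀ > 0. Then the operator norm of the matrix γ₀·(v·γ), acting on ℂ⁴ equipped with the standard Hermitian inner product, equals v₀ + √(v₀² − 1), i.e. the relative Doppler shift factor between v and the reference vector e₀ = (1,0,0,0). -/

import Mathlib

open Matrix Complex ComplexOrder
open scoped ComplexInnerProductSpace

/-- The Dirac gamma matrix `γ₀ = diag(1,1,-1,-1)`. -/
noncomputable def γ0 : Matrix (Fin 4) (Fin 4) ℂ :=
  !![1, 0, 0, 0; 0, 1, 0, 0; 0, 0, -1, 0; 0, 0, 0, -1]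

/-- The Dirac gamma matrix `γ₁`. -/
noncomputable def γ1 : Matrix (Fin 4) (Fin 4) ℂ :=
  !![0, 0, 0, 1; 0, 0, 1, 0; 0, -1, 0, 0; -1, 0, 0, 0]

/-- The Dirac gamma matrix `γ₂`. -/
noncomputable def γ2 : Matrix (Fin 4) (Fin 4) ℂ :=
  !![0, 0, 0, -I; 0, 0, I, 0; 0, I, 0, 0; -I, 0, 0, 0]

/-- The Dirac gamma matrix `γ₃`. -/
noncomputable def γ3 : Matrix (Fin 4) (Fin 4) ℂ :=
  !![0, 0, 1, 0; 0, 0, 0, -1; -1, 0, 0, 0; 0, 1, 0, 0]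

/-- `v·γ := v₀γ₀ + v₁γ₁ + v₂γ₂ + v₃γ₃`. -/
noncomputable def vγ (v : Fin 4 → ℝ) : Matrix (Fin 4) (Fin 4) ℂ :=
  (v 0 : ℂ) • γ0 + (v 1 : ℂ) • γ1 + (v 2 : ℂ) • γ2 + (v 3 : ℂ) • γ3

/-- The Minkowski form `η(u,v) = u₀v₀ − u₁v₁ − u₂v₂ − u₃v₃` on `ℝ⁴`. -/
def mink (u v : Fin 4 → ℝ) : ℝ := u 0 * v 0 - u 1 * v 1 - u 2 * v 2 - u 3 * v 3

/-- Explicit form of `γ₀ · (v·γ)`. -/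
noncomputable def Mex (v : Fin 4 → ℝ) : Matrix (Fin 4) (Fin 4) ℂ :=
    !![(v 0 : ℂ), 0, (v 3 : ℂ), (v 1 : ℂ) - (v 2 : ℂ)*I;
       0, (v 0 : ℂ), (v 1 : ℂ) + (v 2 : ℂ)*I, -(v 3 : ℂ);
       (v 3 : ℂ), (v 1 : ℂ) - (v 2 : ℂ)*I, (v 0 : ℂ), 0;
       (v 1 : ℂ) + (v 2 : ℂ)*I, -(v 3 : ℂ), 0, (v 0 : ℂ)]

lemma gamma_mul_eq_Mex (v : Fin 4 → ℝ) : γ0 * vγ v = Mex v := by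
  ext i j
  fin_cases i <;> fin_cases j <;>
    simp [γ0, γ1, γ2, γ3, vγ, Mex, Matrix.mul_apply, Fin.sum_univ_four] <;> ring

lemma Mex_sq (v : Fin 4 → ℝ) (hv : v 0 * v 0 - v 1 * v 1 - v 2 * v 2 - v 3 * v 3 = 1) :
    Mex v * Mex v = (2 * v 0 : ℂ) • Mex v - 1 := by
  have hr : v 0 ^ 2 = 1 + v 1 ^ 2 + v 2 ^ 2 + v 3 ^ 2 := by nlinarith [hv]
  have hC : (v 0 : ℂ) ^ 2 = 1 + (v 1 : ℂ) ^ 2 + (v 2 : ℂ) ^ 2 + (v 3 : ℂ) ^ 2 := by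
    exact_mod_cast hr
  ext i j
  fin_cases i <;> fin_cases j <;>
    · simp [Mex, Matrix.mul_apply, Fin.sum_univ_four, Matrix.one_apply]
      first
      | ring1
      | linear_combination hC
      | linear_combination -hC
      | linear_combination hC - (v 2 : ℂ)^2 * Complex.I_sq
      | linear_combination -hC - (v 2 : ℂ)^2 * Complex.I_sq

lemma Mex_sa (v : Fin 4 → ℝ) : (Mex v)ᴴ = Mex v := by
  ext i j
  fin_cases i <;> fin_cases j <;> simp [Mex] <;> ring

lemma Mex_mulVec (v : Fin 4 → ℝ) (s : ℝ) (hs : s ^ 2 = v 1 ^ 2 + v 2 ^ 2 + v 3 ^ 2) :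
    (Mex v).mulVec ![(s : ℂ), 0, (v 3 : ℂ), (v 1 : ℂ) + (v 2 : ℂ)*I] =
      ((v 0 + s : ℝ) : ℂ) • ![(s : ℂ), 0, (v 3 : ℂ), (v 1 : ℂ) + (v 2 : ℂ)*I] := by
  have hC : (s : ℂ) ^ 2 = (v 1 : ℂ) ^ 2 + (v 2 : ℂ) ^ 2 + (v 3 : ℂ) ^ 2 := by
    exact_mod_cast hs
  ext i
  fin_cases i <;>
    · simp [Mex, Matrix.mulVec, dotProduct, Fin.sum_univ_four]
      push_cast
      first
      | ring1
      | linear_combination hC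
      | linear_combination -hC
      | linear_combination hC - (v 2 : ℂ)^2 * Complex.I_sq
      | linear_combination -hC - (v 2 : ℂ)^2 * Complex.I_sq

set_option maxHeartbeats 1000000 in
/-- If `v` is a future-directed unit timelike vector then the operator norm of `γ₀·(v·γ)` on
`ℂ⁴` with the standard Hermitian inner product is `v₀ + √(v₀² − 1)`, the Doppler shift factor
between `v` and `e₀ = (1,0,0,0)`. -/
theorem statement5 (v : Fin 4 → ℝ) (hv : mink v v = 1) (hv0 : 0 < v 0) :
    ‖Matrix.toEuclideanCLM (𝕜 := ℂ) (n := Fin 4) (γ0 * vγ v)‖ =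
      v 0 + Real.sqrt ((v 0) ^ 2 - 1) := by
  have hv' : v 0 * v 0 - v 1 * v 1 - v 2 * v 2 - v 3 * v 3 = 1 := hv
  have hr : v 0 ^ 2 = 1 + v 1 ^ 2 + v 2 ^ 2 + v 3 ^ 2 := by nlinarith [hv']
  set s : ℝ := Real.sqrt ((v 0) ^ 2 - 1) with hs_def
  have hnn : (0:ℝ) ≤ v 0 ^ 2 - 1 := by nlinarith [sq_nonneg (v 1), sq_nonneg (v 2), sq_nonneg (v 3)]
  have hs0 : 0 ≤ s := Real.sqrt_nonneg _
  have hs2 : s ^ 2 = v 0 ^ 2 - 1 := Real.sq_sqrt hnn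
  have hs2' : s ^ 2 = v 1 ^ 2 + v 2 ^ 2 + v 3 ^ 2 := by linarith
  rw [gamma_mul_eq_Mex]
  set A := Matrix.toEuclideanCLM (𝕜 := ℂ) (n := Fin 4) (Mex v) with hA_def
  have hA2 : A * A = (2 * v 0 : ℂ) • A - 1 := by
    rw [hA_def, ← _root_.map_mul, Mex_sq v hv', map_sub, _root_.map_smul, _root_.map_one]
  have hAsa : IsSelfAdjoint A := by
    rw [hA_def]
    have hMsa : _root_.IsSelfAdjoint (Mex v) := by
      show star (Mex v) = Mex v
      rw [Matrix.star_eq_conjTranspose]; exact Mex_sa v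
    exact hMsa.map _
  have hadj : ContinuousLinearMap.adjoint A = A :=
    ContinuousLinearMap.isSelfAdjoint_iff'.mp hAsa
  -- upper bound
  have hub : ‖A‖ ≤ v 0 + s := by
    apply ContinuousLinearMap.opNorm_le_bound _ (by positivity)
    intro ψ
    have hAA : A (A ψ) = (2 * v 0 : ℂ) • (A ψ) - ψ := by
      have : (A * A) ψ = ((2 * v 0 : ℂ) • A - 1) ψ := by rw [hA2]
      simpa using this
    have h1 : (⟪A ψ, A ψ⟫ : ℂ) = ⟪ψ, A (A ψ)⟫ := by
      have := ContinuousLinearMap.adjoint_inner_left A (A ψ) ψ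
      rwa [hadj] at this
    have h2 : (⟪A ψ, A ψ⟫ : ℂ) = (2 * v 0 : ℂ) * ⟪ψ, A ψ⟫ - ⟪ψ, ψ⟫ := by
      rw [h1, hAA, inner_sub_right, inner_smul_right]
    have e1 : (⟪A ψ, A ψ⟫ : ℂ).re = ‖A ψ‖ ^ 2 := by
      simpa using inner_self_eq_norm_sq (𝕜 := ℂ) (A ψ)
    have e2 : (⟪ψ, ψ⟫ : ℂ).re = ‖ψ‖ ^ 2 := by
      simpa using inner_self_eq_norm_sq (𝕜 := ℂ) ψ
    have h3 : ‖A ψ‖ ^ 2 = 2 * v 0 * (⟪ψ, A ψ⟫).re - ‖ψ‖ ^ 2 := by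
      have hre := congrArg Complex.re h2
      rw [e1] at hre
      simp only [Complex.sub_re, Complex.mul_re, Complex.mul_im, Complex.re_ofNat,
        Complex.im_ofNat, Complex.ofReal_re, Complex.ofReal_im] at hre
      rw [e2] at hre
      linarith [hre]
    have h4 : (⟪ψ, A ψ⟫).re ≤ ‖ψ‖ * ‖A ψ‖ := by
      calc (⟪ψ, A ψ⟫).re ≤ ‖⟪ψ, A ψ⟫‖ := Complex.re_le_norm _
        _ ≤ ‖ψ‖ * ‖A ψ‖ := norm_inner_le_norm _ _
    have ha : (0:ℝ) ≤ ‖A ψ‖ := norm_nonneg _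
    have hb : (0:ℝ) ≤ ‖ψ‖ := norm_nonneg _
    nlinarith [mul_nonneg hs0 hb, sq_nonneg (‖A ψ‖ - (v 0 + s) * ‖ψ‖),
      sq_nonneg (‖A ψ‖ - (v 0 - s) * ‖ψ‖), mul_nonneg (mul_nonneg hs0 hb) hb]
  -- lower bound
  have hlb : v 0 + s ≤ ‖A‖ := by
    by_cases hz : v 1 ^ 2 + v 2 ^ 2 + v 3 ^ 2 = 0
    · -- then v = e₀ and A = 1
      have h1 : v 1 = 0 := by nlinarith [sq_nonneg (v 1), sq_nonneg (v 2), sq_nonneg (v 3)]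
      have h2 : v 2 = 0 := by nlinarith [sq_nonneg (v 1), sq_nonneg (v 2), sq_nonneg (v 3)]
      have h3 : v 3 = 0 := by nlinarith [sq_nonneg (v 1), sq_nonneg (v 2), sq_nonneg (v 3)]
      have h0 : v 0 = 1 := by nlinarith
      have hM1 : Mex v = 1 := by
        ext i j
        fin_cases i <;> fin_cases j <;>
          simp [Mex, h0, h1, h2, h3, Matrix.one_apply, Matrix.vecHead, Matrix.vecTail]
      have hs' : s = 0 := by
        rw [hs_def, h0]; simp
      have : A = 1 := by rw [hA_def, hM1, _root_.map_one]
      rw [this, hs', h0, norm_one]; norm_num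
    · have hspos : 0 < s := by
        have hpos : 0 < v 1 ^ 2 + v 2 ^ 2 + v 3 ^ 2 :=
          lt_of_le_of_ne (by positivity) (Ne.symm hz)
        exact Real.sqrt_pos.mpr (by linarith)
      set w : Fin 4 → ℂ := ![(s : ℂ), 0, (v 3 : ℂ), (v 1 : ℂ) + (v 2 : ℂ)*I] with hw_def
      set ψ : EuclideanSpace ℂ (Fin 4) := (WithLp.equiv 2 (Fin 4 → ℂ)).symm w with hψ_def
      have hAψ : A ψ = ((v 0 + s : ℝ) : ℂ) • ψ := by
        rw [hA_def, hψ_def, WithLp.equiv_symm_apply, Matrix.toEuclideanCLM_toLp]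
        rw [Mex_mulVec v s hs2', ← hw_def, WithLp.toLp_smul]
      have hψne : ψ ≠ 0 := by
        intro h
        have hw0 : w = 0 := by
          have := congrArg (WithLp.equiv 2 (Fin 4 → ℂ)) h
          simpa [hψ_def] using this
        have : (s : ℂ) = 0 := by
          have := congrFun hw0 0
          simpa [hw_def] using this
        exact (ne_of_gt hspos) (by exact_mod_cast this)
      have hψpos : 0 < ‖ψ‖ := norm_pos_iff.mpr hψne
      have hle : ‖A ψ‖ ≤ ‖A‖ * ‖ψ‖ := A.le_opNorm ψ
      rw [hAψ, norm_smul] at hle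
      have hnrm : ‖((v 0 + s : ℝ) : ℂ)‖ = v 0 + s := by
        rw [Complex.norm_real]; exact abs_of_pos (by positivity)
      rw [hnrm] at hle
      exact le_of_mul_le_mul_right (by linarith) hψpos
  linarith
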